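/- Let 0<q<1 and a∈ℝ, and set t = q^a − q^{−a}. Define operators on the Hilbert space ℓ²(ℕ) with standard orthonormal basis (e_p)_{p≥0} by: Z e_p = q^{2p−a+1} e_p, X e_p = √((1−q^{2p})(q^{−2a+2p}+1)) e_{p−1} (with X e_0 = 0), and Y e_p = √((1−q^{2p+2})(q^{−2a+2p+2}+1)) e_{p+1}. Then these bounded operators satisfy the Podleś sphere relations: X Z = q² Z X, Y Z = q^{−2} Z Y, X Y = 1 − q t Z − q² Z², Y X = 1 − q^{−1} t Z − q^{−2} Z², and moreover X* = Y and Z* = Z. -/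

import Mathlib

open scoped ENNReal ComplexInnerProductSpace

noncomputable section

/-- `ℓ²(ℕ)` with complex coefficients. -/
abbrev l2N : Type := lp (fun _ : ℕ => ℂ) 2

/-- standard orthonormal basis vector `e p` of `ℓ²(ℕ)`. -/
def e (p : ℕ) : l2N := lp.single 2 p 1

lemma ext_e (A B : l2N →L[ℂ] l2N) (h : ∀ p, A (e p) = B (e p)) : A = B := by
  refine ContinuousLinearMap.ext fun f => ?_
  have hs : HasSum (fun i : ℕ => lp.single 2 i (f i)) f :=
    lp.hasSum_single ENNReal.ofNat_ne_top f
  have h1 : ∀ i : ℕ, lp.single (E := fun _ : ℕ => ℂ) 2 i (f i) = f i • e i := by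
    intro i
    rw [e, ← lp.single_smul]
    norm_num
  have hA : HasSum (fun i : ℕ => A (lp.single 2 i (f i))) (A f) := hs.mapL A
  have hB : HasSum (fun i : ℕ => B (lp.single 2 i (f i))) (B f) := hs.mapL B
  refine hA.unique ?_
  convert hB using 2 with i
  rw [h1, map_smul, map_smul, h i]

lemma ext_coord (u v : l2N) (h : ∀ n : ℕ, ⟪e n, u⟫ = ⟪e n, v⟫) : u = v := by
  refine lp.ext (funext fun n => ?_)
  have := h n
  rw [e, lp.inner_single_left, lp.inner_single_left] at this
  simpa [RCLike.inner_apply] using this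

lemma inner_e (m n : ℕ) : ⟪e m, e n⟫ = if m = n then (1 : ℂ) else 0 := by
  rw [e, lp.inner_single_left]
  rcases eq_or_ne m n with h | h
  · subst h
    simp [e, RCLike.inner_apply, lp.single_apply_self]
  · simp [e, RCLike.inner_apply,
      lp.single_apply_ne (E := fun _ : ℕ => ℂ) 2 n 1 h, h]

/-- The operators of the representation `π₊` of the Podleś sphere `O_q(S_t²)` satisfy
the defining relations of the Podleś sphere, together with `X* = Y`, `Z* = Z`. -/
theorem podles_representation_relations (q a : ℝ) (hq0 : 0 < q) (hq1 : q < 1)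
    (t : ℝ) (ht : t = q ^ a - q ^ (-a))
    (X Y Z : l2N →L[ℂ] l2N)
    (hZ : ∀ p : ℕ, Z (e p) = ((q ^ (2 * (p : ℝ) - a + 1) : ℝ) : ℂ) • e p)
    (hX0 : X (e 0) = 0)
    (hX : ∀ p : ℕ, X (e (p + 1)) =
      ((Real.sqrt ((1 - q ^ (2 * ((p : ℝ) + 1))) * (q ^ (-(2 * a) + 2 * ((p : ℝ) + 1)) + 1)) : ℝ) : ℂ)
        • e p)
    (hY : ∀ p : ℕ, Y (e p) =
      ((Real.sqrt ((1 - q ^ (2 * (p : ℝ) + 2)) * (q ^ (-(2 * a) + 2 * (p : ℝ) + 2) + 1)) : ℝ) : ℂ)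
        • e (p + 1)) :
    X ∘L Z = ((q : ℂ) ^ 2) • (Z ∘L X) ∧
    Y ∘L Z = ((q : ℂ) ^ 2)⁻¹ • (Z ∘L Y) ∧
    X ∘L Y = 1 - ((q * t : ℝ) : ℂ) • Z - ((q : ℂ) ^ 2) • (Z ∘L Z) ∧
    Y ∘L X = 1 - (((q⁻¹ * t : ℝ)) : ℂ) • Z - ((q : ℂ) ^ 2)⁻¹ • (Z ∘L Z) ∧
    ContinuousLinearMap.adjoint X = Y ∧
    ContinuousLinearMap.adjoint Z = Z := by
  have hqne : q ≠ 0 := ne_of_gt hq0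
  have hq2 : (q:ℝ) ^ 2 ≠ 0 := pow_ne_zero 2 hqne
  set s : ℕ → ℝ := fun p =>
    Real.sqrt ((1 - q ^ (2 * (p : ℝ) + 2)) * (q ^ (-(2 * a) + 2 * (p : ℝ) + 2) + 1)) with hs_def
  have hX' : ∀ p : ℕ, X (e (p + 1)) = ((s p : ℝ) : ℂ) • e p := by
    intro p
    rw [hX p, show -(2 * a) + 2 * ((p:ℝ) + 1) = -(2 * a) + 2 * (p:ℝ) + 2 from by ring,
      show 2 * ((p:ℝ) + 1) = 2 * (p:ℝ) + 2 from by ring]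
  have hY' : ∀ p : ℕ, Y (e p) = ((s p : ℝ) : ℂ) • e (p + 1) := fun p => hY p
  set z : ℕ → ℝ := fun p => q ^ (2 * (p : ℝ) - a + 1) with hz_def
  have hZ' : ∀ p : ℕ, Z (e p) = ((z p : ℝ) : ℂ) • e p := fun p => hZ p
  have hrpow2 : q ^ (2:ℝ) = q ^ 2 := by
    rw [← Real.rpow_natCast q 2]; norm_num
  have hs2 : ∀ p : ℕ, s p * s p =
      (1 - q ^ (2 * (p : ℝ) + 2)) * (q ^ (-(2 * a) + 2 * (p : ℝ) + 2) + 1) := by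
    intro p
    refine Real.mul_self_sqrt (mul_nonneg ?_ ?_)
    · have : q ^ (2 * (p : ℝ) + 2) ≤ 1 :=
        Real.rpow_le_one hq0.le hq1.le (by positivity)
      linarith
    · have : (0:ℝ) < q ^ (-(2 * a) + 2 * (p : ℝ) + 2) := Real.rpow_pos_of_pos hq0 _
      linarith
  have hmul : ∀ x y : ℝ, q ^ x * q ^ y = q ^ (x + y) :=
    fun x y => (Real.rpow_add hq0 x y).symm
  have hzsucc : ∀ p : ℕ, z (p + 1) = q ^ 2 * z p := by
    intro p
    rw [hz_def]
    push_cast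
    rw [show 2 * ((p:ℝ) + 1) - a + 1 = (2:ℝ) + (2 * (p:ℝ) - a + 1) by ring,
      Real.rpow_add hq0, hrpow2]
  -- relation 1
  have rel1 : X ∘L Z = ((q : ℂ) ^ 2) • (Z ∘L X) := by
    refine ext_e _ _ fun p => ?_
    cases p with
    | zero => simp [hZ', hX0, map_smul]
    | succ p =>
      simp only [ContinuousLinearMap.comp_apply, ContinuousLinearMap.smul_apply, hZ', hX',
        map_smul, smul_smul]
      congr 1
      push_cast [hzsucc p]
      ring
  -- relation 2
  have rel2 : Y ∘L Z = ((q : ℂ) ^ 2)⁻¹ • (Z ∘L Y) := by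
    refine ext_e _ _ fun p => ?_
    simp only [ContinuousLinearMap.comp_apply, ContinuousLinearMap.smul_apply, hZ', hY',
      map_smul, smul_smul]
    congr 1
    have hq2' : ((q:ℂ))^2 ≠ 0 := pow_ne_zero 2 (by exact_mod_cast hqne)
    have hqc : (q:ℂ) ≠ 0 := by exact_mod_cast hqne
    field_simp
    push_cast [hzsucc p]
    ring
  -- the scalar identity for the XY relation
  have key : ∀ p : ℕ, s p * s p = 1 - (q * t) * z p - q ^ 2 * (z p * z p) := by
    intro p
    have e1 : q * q ^ a * q ^ (2 * (p:ℝ) - a + 1) = q ^ (2 * (p:ℝ) + 2) := by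
      rw [mul_assoc, hmul, mul_comm, ← Real.rpow_add_one hqne]
      congr 1; ring
    have e2 : q * q ^ (-a) * q ^ (2 * (p:ℝ) - a + 1) = q ^ (-(2 * a) + 2 * (p:ℝ) + 2) := by
      rw [mul_assoc, hmul, mul_comm, ← Real.rpow_add_one hqne]
      congr 1; ring
    have e3 : q ^ 2 * (q ^ (2 * (p:ℝ) - a + 1) * q ^ (2 * (p:ℝ) - a + 1)) =
        q ^ ((2 * (p:ℝ) + 2) + (-(2 * a) + 2 * (p:ℝ) + 2)) := by
      rw [hmul, ← hrpow2, hmul]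
      congr 1; ring
    rw [hs2 p, ht, hz_def]
    simp only
    linear_combination e1 - e2 + e3 - hmul (2 * (p:ℝ) + 2) (-(2 * a) + 2 * (p:ℝ) + 2)
  -- relation 3
  have rel3 : X ∘L Y = 1 - ((q * t : ℝ) : ℂ) • Z - ((q : ℂ) ^ 2) • (Z ∘L Z) := by
    refine ext_e _ _ fun p => ?_
    have hc := congrArg (fun r : ℝ => (r : ℂ)) (key p)
    push_cast at hc
    simp only [ContinuousLinearMap.comp_apply, hY', map_smul, hX', smul_smul,
      ContinuousLinearMap.sub_apply, ContinuousLinearMap.smul_apply,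
      ContinuousLinearMap.one_apply, hZ']
    match_scalars
    linear_combination hc
  -- relation 4
  have rel4 : Y ∘L X = 1 - (((q⁻¹ * t : ℝ)) : ℂ) • Z - ((q : ℂ) ^ 2)⁻¹ • (Z ∘L Z) := by
    refine ext_e _ _ fun p => ?_
    cases p with
    | zero =>
      have hz0 : z 0 = q ^ (1 - a) := by
        rw [hz_def]
        norm_num
        ring_nf
      have g1 : q ^ a * q ^ (1 - a) = q := by
        rw [hmul, show a + (1 - a) = (1:ℝ) by ring, Real.rpow_one]
      have g2 : q ^ (-a) * q ^ (1 - a) = q * q ^ (-(2 * a)) := by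
        rw [hmul, show -a + (1 - a) = (1:ℝ) + -(2 * a) by ring, Real.rpow_add hq0,
          Real.rpow_one]
      have g3 : q ^ (1 - a) * q ^ (1 - a) = q ^ 2 * q ^ (-(2 * a)) := by
        rw [hmul, ← hrpow2, hmul, show (2:ℝ) + -(2 * a) = 1 - a + (1 - a) by ring]
      have key0 : (1:ℝ) - (q⁻¹ * t) * z 0 - ((q:ℝ) ^ 2)⁻¹ * (z 0 * z 0) = 0 := by
        rw [ht, hz0, g3, mul_assoc, sub_mul, g1, g2]
        field_simp
        ring
      have hc := congrArg (fun r : ℝ => (r : ℂ)) key0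
      push_cast at hc
      simp only [ContinuousLinearMap.comp_apply, hX0, map_zero, map_smul,
        ContinuousLinearMap.sub_apply, ContinuousLinearMap.smul_apply,
        ContinuousLinearMap.one_apply, hZ', smul_smul]
      match_scalars
      linear_combination -hc
    | succ p =>
      have key2 : s p * s p =
          1 - (q⁻¹ * t) * z (p + 1) - ((q:ℝ) ^ 2)⁻¹ * (z (p + 1) * z (p + 1)) := by
        rw [hzsucc p, key p]
        field_simp
      have hc := congrArg (fun r : ℝ => (r : ℂ)) key2
      push_cast at hc
      simp only [ContinuousLinearMap.comp_apply, hX', map_smul, hY', smul_smul,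
        ContinuousLinearMap.sub_apply, ContinuousLinearMap.smul_apply,
        ContinuousLinearMap.one_apply, hZ']
      match_scalars
      linear_combination hc
  -- adjoints
  have hadjX : ContinuousLinearMap.adjoint X = Y := by
    refine ext_e _ _ fun p => ext_coord _ _ fun n => ?_
    rw [ContinuousLinearMap.adjoint_inner_right]
    cases n with
    | zero =>
      rw [hX0, hY' p]
      simp [inner_smul_right, inner_e]
    | succ n =>
      rw [hX' n, hY' p]
      by_cases h : n = p
      · subst h
        rw [inner_smul_left, inner_smul_right, inner_e, inner_e]
        simp [inner_smul_left, inner_smul_right, inner_e, Complex.conj_ofReal]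
      · rw [inner_smul_left, inner_smul_right, inner_e, inner_e]
        simp [inner_smul_left, inner_smul_right, inner_e, h]
  have hadjZ : ContinuousLinearMap.adjoint Z = Z := by
    refine ext_e _ _ fun p => ext_coord _ _ fun n => ?_
    rw [ContinuousLinearMap.adjoint_inner_right, hZ' n, hZ' p]
    by_cases h : n = p
    · subst h
      rw [inner_smul_left, inner_smul_right, inner_e]
      simp [inner_smul_left, inner_smul_right, inner_e, Complex.conj_ofReal]
    · rw [inner_smul_left, inner_smul_right, inner_e]
      simp [inner_smul_left, inner_smul_right, inner_e, h]
  exact ⟨rel1, rel2, rel3, rel4, hadjX, hadjZ⟩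

end
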